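/- Let P be a finite connected poset and M : P → vec a persistence module. Suppose M ≅ ⊕_{i∈F} M_i, where F is a finite index set and each M_i is a nonzero indecomposable persistence module. Then the generalized rank of M equals the number of indices i ∈ F such that M_i is isomorphic to V_P, the interval module supported on all of P. -/

import Mathlib

open scoped Classical
open Module

noncomputable section

/-- A pointwise finite-dimensional persistence module over a poset `P`. -/
structure PersMod (𝔽 : Type) [Field 𝔽] (P : Type) [PartialOrder P] where
  V : P → Type
  [iAdd : ∀ p, AddCommGroup (V p)]
  [iMod : ∀ p, Module 𝔽 (V p)]
  [iFin : ∀ p, FiniteDimensional 𝔽 (V p)]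
  φ : ∀ {p q : P}, p ≤ q → (V p →ₗ[𝔽] V q)
  φ_refl : ∀ p : P, φ (le_refl p) = LinearMap.id
  φ_comp : ∀ {p q r : P} (hpq : p ≤ q) (hqr : q ≤ r),
    (φ hqr).comp (φ hpq) = φ (le_trans hpq hqr)

attribute [instance] PersMod.iAdd PersMod.iMod PersMod.iFin

/-- A poset is connected if any two elements are joined by a finite zigzag of
comparable elements. -/
def ZigzagConnected (P : Type) [PartialOrder P] : Prop :=
  ∀ p q : P, Relation.ReflTransGen (fun a b : P => a ≤ b ∨ b ≤ a) p q

section SetNotions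

variable {P : Type} [PartialOrder P]

/-- Convexity of a subset of a poset. -/
def SetConvex (I : Set P) : Prop :=
  ∀ ⦃p q r : P⦄, p ∈ I → r ∈ I → p ≤ q → q ≤ r → q ∈ I

/-- Connectedness of a subset: any two points are joined by a zigzag of
comparable elements staying inside the subset. -/
def SetZigzagConn (I : Set P) : Prop :=
  ∀ p ∈ I, ∀ q ∈ I,
    Relation.ReflTransGen (fun a b : P => a ∈ I ∧ b ∈ I ∧ (a ≤ b ∨ b ≤ a)) p q

/-- An interval of a poset: nonempty, convex and connected. -/
def IsIntervalSet (I : Set P) : Prop :=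
  I.Nonempty ∧ SetConvex I ∧ SetZigzagConn I

/-- A path-connected subposet (member of `Con(P)`): nonempty and any two of its
points are joined by a sequence in `I` in which consecutive elements are related
by the covering relation of `P`. -/
def IsPathConnIn (I : Set P) : Prop :=
  I.Nonempty ∧ ∀ p ∈ I, ∀ q ∈ I,
    Relation.ReflTransGen (fun a b : P => a ∈ I ∧ b ∈ I ∧ (a ⋖ b ∨ b ⋖ a)) p q

lemma setConvex_univ : SetConvex (Set.univ : Set P) := by
  intro p q r _ _ _ _; trivial

end SetNotions

namespace PersMod

variable {𝔽 : Type} [Field 𝔽] {P : Type} [PartialOrder P]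

/-- The limit of a persistence module: the module of compatible sections. -/
def sections (M : PersMod 𝔽 P) : Submodule 𝔽 (∀ p, M.V p) where
  carrier := {x | ∀ (p q : P) (h : p ≤ q), M.φ h (x p) = x q}
  add_mem' := by
    intro x y hx hy p q h
    simp only [Pi.add_apply, map_add]
    rw [hx p q h, hy p q h]
  zero_mem' := by intro p q h; simp
  smul_mem' := by
    intro c x hx p q h
    simp only [Pi.smul_apply, map_smul]
    rw [hx p q h]

/-- The relations defining the colimit of a persistence module. -/
def colimRel (M : PersMod 𝔽 P) : Submodule 𝔽 (DirectSum P fun p => M.V p) :=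
  Submodule.span 𝔽 {z | ∃ (p q : P) (h : p ≤ q) (v : M.V p),
    z = DirectSum.lof 𝔽 P (fun p => M.V p) q (M.φ h v)
      - DirectSum.lof 𝔽 P (fun p => M.V p) p v}

/-- The colimit of a persistence module. -/
abbrev colim (M : PersMod 𝔽 P) :=
  (DirectSum P fun p => M.V p) ⧸ M.colimRel

/-- The canonical map `lim M → colim M` factored through the value at `p`,
i.e. `ι_p ∘ π_p`. -/
def canonicalMapAt (M : PersMod 𝔽 P) (p : P) : M.sections →ₗ[𝔽] M.colim :=
  (M.colimRel.mkQ.comp (DirectSum.lof 𝔽 P (fun q => M.V q) p)).comp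
    ((LinearMap.proj p).comp M.sections.subtype)

/-- The rank of the canonical map `lim M → colim M` computed through `p`. -/
def genRankAt (M : PersMod 𝔽 P) (p : P) : ℕ :=
  finrank 𝔽 (LinearMap.range (M.canonicalMapAt p))

/-- The generalized rank of a persistence module over a (connected) poset. -/
def genRank (M : PersMod 𝔽 P) [Nonempty P] : ℕ :=
  M.genRankAt (Classical.arbitrary P)

/-- Restriction of a persistence module to a subposet. -/
def restrict (M : PersMod 𝔽 P) (I : Set P) : PersMod 𝔽 I where
  V := fun i => M.V i.val
  φ := fun {i j} h => M.φ h
  φ_refl := fun i => M.φ_refl i.val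
  φ_comp := fun hpq hqr => M.φ_comp hpq hqr

/-- The generalized rank invariant: the generalized rank of the restriction
of `M` to `I`. -/
def rkInv (M : PersMod 𝔽 P) (I : Set P) : ℕ :=
  if h : I.Nonempty then (M.restrict I).genRankAt ⟨h.choose, h.choose_spec⟩ else 0

/-- Finite direct sums of persistence modules. -/
def dSum {F : Type} [Fintype F] (Ms : F → PersMod 𝔽 P) : PersMod 𝔽 P where
  V := fun p => ∀ i, (Ms i).V p
  φ := fun {p q} h => LinearMap.pi fun i => ((Ms i).φ h).comp (LinearMap.proj i)
  φ_refl := by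
    intro p
    refine LinearMap.ext fun x => funext fun i => ?_
    simp [(Ms i).φ_refl p]
  φ_comp := by
    intro p q r hpq hqr
    refine LinearMap.ext fun x => funext fun i => ?_
    simpa using LinearMap.congr_fun ((Ms i).φ_comp hpq hqr) (x i)

/-- Binary direct sum of persistence modules. -/
def prodMod (M N : PersMod 𝔽 P) : PersMod 𝔽 P where
  V := fun p => M.V p × N.V p
  φ := fun h => (M.φ h).prodMap (N.φ h)
  φ_refl := by
    intro p
    refine LinearMap.ext fun x => ?_
    simp [M.φ_refl p, N.φ_refl p]
  φ_comp := by
    intro p q r h1 h2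
    refine LinearMap.ext fun x => ?_
    have hM := LinearMap.congr_fun (M.φ_comp h1 h2) x.1
    have hN := LinearMap.congr_fun (N.φ_comp h1 h2) x.2
    simp only [LinearMap.comp_apply] at hM hN ⊢
    simp [hM, hN]

/-- The zero persistence module. -/
def IsZero (M : PersMod 𝔽 P) : Prop := ∀ p, Subsingleton (M.V p)

/-- Isomorphism of persistence modules. -/
def Isom (M N : PersMod 𝔽 P) : Prop :=
  ∃ e : ∀ p, M.V p ≃ₗ[𝔽] N.V p,
    ∀ (p q : P) (h : p ≤ q) (v : M.V p), e q (M.φ h v) = N.φ h (e p v)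

/-- Indecomposability of a persistence module. -/
def Indecomposable (M : PersMod 𝔽 P) : Prop :=
  ¬ M.IsZero ∧
    ∀ M₁ M₂ : PersMod 𝔽 P, M.Isom (M₁.prodMod M₂) → M₁.IsZero ∨ M₂.IsZero

end PersMod

section IntervalModule

variable {P : Type} [PartialOrder P]

/-- The fiber of the interval module at `p`: all of `𝔽` if `p ∈ I`, and `0`
otherwise. -/
def fiber (𝔽 : Type) [Field 𝔽] (I : Set P) (p : P) : Submodule 𝔽 𝔽 where
  carrier := {x | p ∈ I ∨ x = 0}
  zero_mem' := Or.inr rfl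
  add_mem' := by
    rintro x y (h | rfl) (h' | rfl)
    · exact Or.inl h
    · exact Or.inl h
    · exact Or.inl h'
    · exact Or.inr (add_zero 0)
  smul_mem' := by
    rintro c x (h | rfl)
    · exact Or.inl h
    · exact Or.inr (smul_zero c)

/-- The interval module `V_I` of a convex subset `I ⊆ P`. -/
def intervalModule (𝔽 : Type) [Field 𝔽] (I : Set P) (hc : SetConvex I) :
    PersMod 𝔽 P where
  V := fun p => fiber 𝔽 I p
  φ := fun {p q} _h =>
    LinearMap.restrict (if q ∈ I then LinearMap.id else 0)
      (by
        intro x hx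
        by_cases hq : q ∈ I
        · rw [if_pos hq]; exact Or.inl hq
        · rw [if_neg hq]; exact Or.inr rfl)
  φ_refl := by
    intro p
    refine LinearMap.ext fun x => Subtype.ext ?_
    rw [LinearMap.restrict_apply]
    by_cases hp : p ∈ I
    · simp [hp]
    · rcases x.2 with h | h
      · exact absurd h hp
      · simp [hp, h]
  φ_comp := by
    intro p q r hpq hqr
    refine LinearMap.ext fun x => Subtype.ext ?_
    simp only [LinearMap.comp_apply, LinearMap.restrict_apply]
    by_cases hr : r ∈ I <;> by_cases hq : q ∈ I <;> simp [hr, hq]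
    rcases x.2 with hp | h0
    · exact absurd (hc hp hr hpq hqr) hq
    · exact h0.symm

end IntervalModule

section Grid

variable {𝔽 : Type} [Field 𝔽]

lemma le_sub_e1 (p : ℤ × ℤ) : ((p.1 - 1, p.2) : ℤ × ℤ) ≤ p :=
  Prod.le_def.mpr ⟨show p.1 - 1 ≤ p.1 by omega, le_rfl⟩

lemma le_sub_e2 (p : ℤ × ℤ) : ((p.1, p.2 - 1) : ℤ × ℤ) ≤ p :=
  Prod.le_def.mpr ⟨le_rfl, show p.2 - 1 ≤ p.2 by omega⟩

lemma le_sub_e12_e1 (p : ℤ × ℤ) : ((p.1 - 1, p.2 - 1) : ℤ × ℤ) ≤ (p.1 - 1, p.2) :=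
  Prod.le_def.mpr ⟨le_rfl, show p.2 - 1 ≤ p.2 by omega⟩

lemma le_sub_e12_e2 (p : ℤ × ℤ) : ((p.1 - 1, p.2 - 1) : ℤ × ℤ) ≤ (p.1, p.2 - 1) :=
  Prod.le_def.mpr ⟨show p.1 - 1 ≤ p.1 by omega, le_rfl⟩

/-- The `0`-th bigraded Betti number of `M : ℤ² → vec` at `p`, defined via the
Koszul complex as the dimension of the cokernel of
`M(p-e₁) ⊕ M(p-e₂) → M(p)`. -/
def beta0 (M : PersMod 𝔽 (ℤ × ℤ)) (p : ℤ × ℤ) : ℕ :=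
  finrank 𝔽
    (M.V p ⧸ LinearMap.range ((M.φ (le_sub_e1 p)).coprod (M.φ (le_sub_e2 p))))

/-- The `2`-nd bigraded Betti number of `M : ℤ² → vec` at `p`, defined via the
Koszul complex as the dimension of the intersection of the kernels of the two
structure maps out of `M(p-e₁-e₂)`. -/
def beta2 (M : PersMod 𝔽 (ℤ × ℤ)) (p : ℤ × ℤ) : ℕ :=
  finrank 𝔽
    ↥(LinearMap.ker (M.φ (le_sub_e12_e1 p)) ⊓ LinearMap.ker (M.φ (le_sub_e12_e2 p)))

/-- The `1`-st bigraded Betti number of `M : ℤ² → vec` at `p`, via the Koszul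
complex characterization. -/
def beta1 (M : PersMod 𝔽 (ℤ × ℤ)) (p : ℤ × ℤ) : ℤ :=
  (beta0 M p : ℤ) + (beta2 M p : ℤ)
    - (finrank 𝔽 (M.V p) : ℤ) + (finrank 𝔽 (M.V (p.1 - 1, p.2)) : ℤ)
    + (finrank 𝔽 (M.V (p.1, p.2 - 1)) : ℤ) - (finrank 𝔽 (M.V (p.1 - 1, p.2 - 1)) : ℤ)

/-- The maximal element of the grid `[m] × [n]` below a point `p ≥ (0,0)` of `ℤ²`. -/
def clamp (m n : ℕ) (p : ℤ × ℤ) : Fin (m + 1) × Fin (n + 1) :=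
  (⟨min p.1.toNat m, Nat.lt_succ_of_le (min_le_right _ _)⟩,
   ⟨min p.2.toNat n, Nat.lt_succ_of_le (min_le_right _ _)⟩)

lemma clamp_mono {m n : ℕ} {p q : ℤ × ℤ} (h : p ≤ q) : clamp m n p ≤ clamp m n q := by
  obtain ⟨h1, h2⟩ := Prod.le_def.mp h
  refine Prod.le_def.mpr ⟨?_, ?_⟩
  · exact Fin.mk_le_mk.mpr (min_le_min (Int.toNat_le_toNat h1) le_rfl)
  · exact Fin.mk_le_mk.mpr (min_le_min (Int.toNat_le_toNat h2) le_rfl)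

/-- `M : ℤ² → vec` is encoded by `M' : [m] × [n] → vec`. -/
def IsEncodedBy {m n : ℕ} (M : PersMod 𝔽 (ℤ × ℤ))
    (M' : PersMod 𝔽 (Fin (m + 1) × Fin (n + 1))) : Prop :=
  (∀ p : ℤ × ℤ, ¬(0 ≤ p.1 ∧ 0 ≤ p.2) → Subsingleton (M.V p)) ∧
  ∃ e : ∀ p : ℤ × ℤ, 0 ≤ p.1 → 0 ≤ p.2 → (M.V p ≃ₗ[𝔽] M'.V (clamp m n p)),
    ∀ (p q : ℤ × ℤ) (hp1 : 0 ≤ p.1) (hp2 : 0 ≤ p.2) (hq1 : 0 ≤ q.1) (hq2 : 0 ≤ q.2)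
      (hpq : p ≤ q) (v : M.V p),
      e q hq1 hq2 (M.φ hpq v) = M'.φ (clamp_mono hpq) (e p hp1 hp2 v)

/-- A point `a ∈ ℤ²` "belongs" to `J ⊆ [m] × [n]` if it is a grid point lying in `J`. -/
def gridPt {m n : ℕ} (a : ℤ × ℤ) (J : Set (Fin (m + 1) × Fin (n + 1))) : Prop :=
  ∃ x ∈ J, (((x.1 : ℕ) : ℤ), ((x.2 : ℕ) : ℤ)) = a

end Grid
section AuxProof

open PersMod

variable {𝔽 : Type} [Field 𝔽] {P : Type} [PartialOrder P]

instance PersMod.fdDirectSum [Fintype P] (M : PersMod 𝔽 P) :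
    FiniteDimensional 𝔽 (DirectSum P fun p => M.V p) :=
  Module.Finite.equiv (DirectSum.linearEquivFunOnFintype 𝔽 P fun p => M.V p).symm

lemma PersMod.canonicalMapAt_apply (M : PersMod 𝔽 P) (p : P) (x : M.sections) :
    M.canonicalMapAt p x
      = M.colimRel.mkQ (DirectSum.lof 𝔽 P (fun q => M.V q) p (x.1 p)) := rfl

/-- The map on colimits induced by a natural transformation. -/
def PersMod.colimMapAux (M N : PersMod 𝔽 P) (f : ∀ p, M.V p →ₗ[𝔽] N.V p)
    (hf : ∀ (p q : P) (h : p ≤ q) (v : M.V p), f q (M.φ h v) = N.φ h (f p v)) :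
    M.colim →ₗ[𝔽] N.colim :=
  M.colimRel.liftQ
    (N.colimRel.mkQ.comp (DirectSum.toModule 𝔽 P _
      fun p => (DirectSum.lof 𝔽 P (fun q => N.V q) p).comp (f p)))
    (by
      rw [PersMod.colimRel, Submodule.span_le]
      rintro z ⟨p, q, h, v, rfl⟩
      rw [SetLike.mem_coe, LinearMap.mem_ker, LinearMap.comp_apply, map_sub,
        DirectSum.toModule_lof, DirectSum.toModule_lof, LinearMap.comp_apply,
        LinearMap.comp_apply, hf p q h v, Submodule.mkQ_apply,
        Submodule.Quotient.mk_eq_zero]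
      exact Submodule.subset_span ⟨p, q, h, f p v, rfl⟩)

lemma PersMod.colimMapAux_mk_lof (M N : PersMod 𝔽 P) (f : ∀ p, M.V p →ₗ[𝔽] N.V p)
    (hf : ∀ (p q : P) (h : p ≤ q) (v : M.V p), f q (M.φ h v) = N.φ h (f p v))
    (p : P) (v : M.V p) :
    PersMod.colimMapAux M N f hf
        (Submodule.Quotient.mk (DirectSum.lof 𝔽 P (fun q => M.V q) p v))
      = Submodule.Quotient.mk (DirectSum.lof 𝔽 P (fun q => N.V q) p (f p v)) := by
  simp [PersMod.colimMapAux, DirectSum.toModule_lof]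

/-- The map on sections induced by a natural transformation. -/
def PersMod.sectionsMapAux (M N : PersMod 𝔽 P) (f : ∀ p, M.V p →ₗ[𝔽] N.V p)
    (hf : ∀ (p q : P) (h : p ≤ q) (v : M.V p), f q (M.φ h v) = N.φ h (f p v)) :
    M.sections →ₗ[𝔽] N.sections where
  toFun x := ⟨fun p => f p (x.1 p),
    fun p q h => (hf p q h (x.1 p)).symm.trans (congrArg (f q) (x.2 p q h))⟩
  map_add' x y := Subtype.ext (funext fun p => map_add _ _ _)
  map_smul' c x := Subtype.ext (funext fun p => map_smul _ _ _)

lemma PersMod.genRankAt_eq_of_equiv (M : PersMod 𝔽 P) (p : P)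
    {A B : Type} [AddCommGroup A] [Module 𝔽 A] [AddCommGroup B] [Module 𝔽 B]
    (f : A →ₗ[𝔽] B) (eS : M.sections ≃ₗ[𝔽] A) (eC : M.colim ≃ₗ[𝔽] B)
    (hcomm : ∀ x, eC (M.canonicalMapAt p x) = f (eS x)) :
    M.genRankAt p = Module.finrank 𝔽 (LinearMap.range f) := by
  have hr : LinearMap.range f
      = Submodule.map (eC : M.colim →ₗ[𝔽] B) (LinearMap.range (M.canonicalMapAt p)) := by
    ext y
    constructor
    · rintro ⟨a, rfl⟩
      refine ⟨M.canonicalMapAt p (eS.symm a), ⟨_, rfl⟩, ?_⟩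
      simp only [LinearEquiv.coe_coe]
      rw [hcomm, eS.apply_symm_apply]
    · rintro ⟨c, ⟨x, rfl⟩, rfl⟩
      refine ⟨eS x, ?_⟩
      simp only [LinearEquiv.coe_coe]
      exact (hcomm x).symm
  rw [PersMod.genRankAt, hr, LinearEquiv.finrank_map_eq]

lemma PersMod.genRankAt_eq_of_isom (M N : PersMod 𝔽 P) (h : M.Isom N) (p : P) :
    M.genRankAt p = N.genRankAt p := by
  obtain ⟨e, he⟩ := h
  have he' : ∀ (p q : P) (hpq : p ≤ q) (v : M.V p),
      (fun r => (e r).toLinearMap) q (M.φ hpq v) = N.φ hpq ((fun r => (e r).toLinearMap) p v) :=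
    he
  have hsymm : ∀ (p q : P) (hpq : p ≤ q) (v : N.V p),
      (fun r => (e r).symm.toLinearMap) q (N.φ hpq v)
        = M.φ hpq ((fun r => (e r).symm.toLinearMap) p v) := by
    intro p q hpq v
    apply (e q).injective
    simp only [LinearEquiv.coe_coe]
    rw [(e q).apply_symm_apply, he, (e p).apply_symm_apply]
  let eS : M.sections ≃ₗ[𝔽] N.sections :=
    LinearEquiv.ofLinear (PersMod.sectionsMapAux M N _ he')
      (PersMod.sectionsMapAux N M _ hsymm)
      (LinearMap.ext fun x => Subtype.ext (funext fun r => by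
        simp [PersMod.sectionsMapAux]))
      (LinearMap.ext fun x => Subtype.ext (funext fun r => by
        simp [PersMod.sectionsMapAux]))
  let eC : M.colim ≃ₗ[𝔽] N.colim :=
    LinearEquiv.ofLinear (PersMod.colimMapAux M N _ he')
      (PersMod.colimMapAux N M _ hsymm)
      (Submodule.linearMap_qext _ (DirectSum.linearMap_ext 𝔽 fun p => LinearMap.ext fun v => by
        simp [PersMod.colimMapAux_mk_lof]))
      (Submodule.linearMap_qext _ (DirectSum.linearMap_ext 𝔽 fun p => LinearMap.ext fun v => by
        simp [PersMod.colimMapAux_mk_lof]))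
  have := PersMod.genRankAt_eq_of_equiv M p (N.canonicalMapAt p) eS eC (fun x => by
    rw [PersMod.canonicalMapAt_apply, PersMod.canonicalMapAt_apply]
    exact PersMod.colimMapAux_mk_lof M N _ he' p (x.1 p))
  rw [this, PersMod.genRankAt]

end AuxProof

section AuxProof2

open PersMod

variable {𝔽 : Type} [Field 𝔽] {P : Type} [PartialOrder P] {F : Type} [Fintype F]

/-- Equivalence between a `Submodule.pi` and the product of the submodules. -/
def piSubEquiv {ι : Type} {Vs : ι → Type} [∀ i, AddCommGroup (Vs i)]
    [∀ i, Module 𝔽 (Vs i)] (S : ∀ i, Submodule 𝔽 (Vs i)) :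
    (Submodule.pi Set.univ S) ≃ₗ[𝔽] ∀ i, S i where
  toFun x := fun i => ⟨x.1 i, x.2 i (Set.mem_univ i)⟩
  invFun y := ⟨fun i => (y i).1, fun i _ => (y i).2⟩
  map_add' x y := rfl
  map_smul' c x := rfl
  left_inv x := rfl
  right_inv y := rfl

lemma dsum_single_nat (Ms : F → PersMod 𝔽 P) (i : F) (p q : P) (h : p ≤ q)
    (v : (Ms i).V p) :
    LinearMap.single 𝔽 (fun j => (Ms j).V q) i ((Ms i).φ h v)
      = (PersMod.dSum Ms).φ h (LinearMap.single 𝔽 (fun j => (Ms j).V p) i v) := by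
  funext j
  simp only [LinearMap.coe_single]
  have hphi : ∀ w : (PersMod.dSum Ms).V p, (PersMod.dSum Ms).φ h w j = (Ms j).φ h (w j) :=
    fun w => rfl
  erw [hphi]
  by_cases hj : j = i
  · subst hj; rw [Pi.single_eq_same, Pi.single_eq_same]
  · rw [Pi.single_eq_of_ne hj, Pi.single_eq_of_ne hj, map_zero]

/-- Colimit of a direct sum maps to the product of colimits. -/
def dsumToPi (Ms : F → PersMod 𝔽 P) :
    (PersMod.dSum Ms).colim →ₗ[𝔽] ∀ i, (Ms i).colim :=
  LinearMap.pi fun i => PersMod.colimMapAux (PersMod.dSum Ms) (Ms i)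
    (fun _p => LinearMap.proj i) (fun _p _q _h _v => rfl)

/-- The product of colimits maps to the colimit of the direct sum. -/
def piToDsum (Ms : F → PersMod 𝔽 P) :
    (∀ i, (Ms i).colim) →ₗ[𝔽] (PersMod.dSum Ms).colim :=
  ∑ i, (PersMod.colimMapAux (Ms i) (PersMod.dSum Ms)
    (fun p => LinearMap.single 𝔽 (fun j => (Ms j).V p) i)
    (dsum_single_nat Ms i)) ∘ₗ LinearMap.proj i

lemma dsumToPi_mk (Ms : F → PersMod 𝔽 P) (p : P) (v : (PersMod.dSum Ms).V p) (i : F) :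
    dsumToPi Ms (Submodule.Quotient.mk
        (DirectSum.lof 𝔽 P (fun q => (PersMod.dSum Ms).V q) p v)) i
      = Submodule.Quotient.mk (DirectSum.lof 𝔽 P (fun q => (Ms i).V q) p (v i)) := by
  erw [dsumToPi, LinearMap.pi_apply, PersMod.colimMapAux_mk_lof]
  rfl

lemma piToDsum_single_mk (Ms : F → PersMod 𝔽 P) (i : F) (p : P) (v : (Ms i).V p) :
    piToDsum Ms (Pi.single i (Submodule.Quotient.mk
        (DirectSum.lof 𝔽 P (fun q => (Ms i).V q) p v)))
      = Submodule.Quotient.mk (DirectSum.lof 𝔽 P (fun q => (PersMod.dSum Ms).V q) p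
          (Pi.single i v)) := by
  classical
  rw [piToDsum, LinearMap.sum_apply, Finset.sum_eq_single i]
  · rw [LinearMap.comp_apply, LinearMap.proj_apply, Pi.single_eq_same]
    erw [PersMod.colimMapAux_mk_lof]
    rfl
  · intro j _ hj
    rw [LinearMap.comp_apply, LinearMap.proj_apply, Pi.single_eq_of_ne hj, map_zero]
  · intro hi; exact absurd (Finset.mem_univ i) hi

lemma PersMod.genRankAt_dSum [Fintype P] (Ms : F → PersMod 𝔽 P) (p₀ : P) :
    (PersMod.dSum Ms).genRankAt p₀ = ∑ i, (Ms i).genRankAt p₀ := by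
  classical
  let eS : (PersMod.dSum Ms).sections ≃ₗ[𝔽] ∀ i, (Ms i).sections :=
    { toFun := fun x i => ⟨fun p => x.1 p i, fun p q h => congrFun (x.2 p q h) i⟩
      invFun := fun y => ⟨fun p i => (y i).1 p, fun p q h => funext fun i => (y i).2 p q h⟩
      map_add' := fun x y => rfl
      map_smul' := fun c x => rfl
      left_inv := fun x => rfl
      right_inv := fun y => rfl }
  have hΦΨ : (dsumToPi Ms).comp (piToDsum Ms) = LinearMap.id := by
    refine LinearMap.pi_ext' fun i => Submodule.linearMap_qext _ ?_
    refine DirectSum.linearMap_ext 𝔽 fun p => LinearMap.ext fun v => ?_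
    simp only [LinearMap.comp_apply, Submodule.mkQ_apply, LinearMap.coe_single,
      LinearMap.id_apply]
    rw [piToDsum_single_mk]
    funext j
    by_cases hj : j = i
    · subst hj
      erw [dsumToPi_mk, Pi.single_eq_same, Pi.single_eq_same]
    · erw [dsumToPi_mk, Pi.single_eq_of_ne hj, Pi.single_eq_of_ne hj, map_zero]
      exact (Submodule.Quotient.mk_eq_zero _).mpr (Submodule.zero_mem _)
  have hΨΦ : (piToDsum Ms).comp (dsumToPi Ms) = LinearMap.id := by
    refine Submodule.linearMap_qext _ (DirectSum.linearMap_ext 𝔽 fun p =>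
      LinearMap.ext fun v => ?_)
    simp only [LinearMap.comp_apply, Submodule.mkQ_apply, LinearMap.id_apply]
    have hΦ : dsumToPi Ms (Submodule.Quotient.mk
          (DirectSum.lof 𝔽 P (fun q => (PersMod.dSum Ms).V q) p v))
        = fun i => Submodule.Quotient.mk (DirectSum.lof 𝔽 P (fun q => (Ms i).V q) p (v i)) :=
      funext fun i => dsumToPi_mk Ms p v i
    rw [hΦ]
    have hsum : (fun i => (Submodule.Quotient.mk
          (DirectSum.lof 𝔽 P (fun q => (Ms i).V q) p (v i)) : (Ms i).colim))
        = ∑ i, Pi.single i ((Submodule.Quotient.mk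
            (DirectSum.lof 𝔽 P (fun q => (Ms i).V q) p (v i))) : (Ms i).colim) :=
      (Finset.univ_sum_single _).symm
    rw [hsum, map_sum]
    rw [Finset.sum_congr rfl fun i _ => piToDsum_single_mk Ms i p (v i)]
    calc (∑ i, (Submodule.Quotient.mk (DirectSum.lof 𝔽 P (fun q => (PersMod.dSum Ms).V q) p
            (Pi.single i (v i))) : (PersMod.dSum Ms).colim))
        = Submodule.Quotient.mk (∑ i, DirectSum.lof 𝔽 P (fun q => (PersMod.dSum Ms).V q) p
            (Pi.single i (v i))) :=
          (map_sum ((PersMod.dSum Ms).colimRel.mkQ) _ _).symm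
      _ = Submodule.Quotient.mk (DirectSum.lof 𝔽 P (fun q => (PersMod.dSum Ms).V q) p
            (∑ i, Pi.single i (v i))) := by erw [map_sum]
      _ = Submodule.Quotient.mk (DirectSum.lof 𝔽 P (fun q => (PersMod.dSum Ms).V q) p v) := by
            erw [Finset.univ_sum_single]
  let eC : (PersMod.dSum Ms).colim ≃ₗ[𝔽] ∀ i, (Ms i).colim :=
    LinearEquiv.ofLinear (dsumToPi Ms) (piToDsum Ms) hΦΨ hΨΦ
  let C : (∀ i, (Ms i).sections) →ₗ[𝔽] ∀ i, (Ms i).colim :=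
    LinearMap.pi fun i => ((Ms i).canonicalMapAt p₀).comp (LinearMap.proj i)
  have hcomm : ∀ x, eC ((PersMod.dSum Ms).canonicalMapAt p₀ x) = C (eS x) := by
    intro x
    funext i
    show dsumToPi Ms ((PersMod.dSum Ms).canonicalMapAt p₀ x) i = _
    rw [PersMod.canonicalMapAt_apply, Submodule.mkQ_apply, dsumToPi_mk]
    rfl
  rw [PersMod.genRankAt_eq_of_equiv (PersMod.dSum Ms) p₀ C eS eC hcomm]
  have hrange : LinearMap.range C
      = Submodule.pi Set.univ (fun i => LinearMap.range ((Ms i).canonicalMapAt p₀)) := by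
    ext y
    simp only [LinearMap.mem_range, Submodule.mem_pi, Set.mem_univ, forall_true_left]
    constructor
    · rintro ⟨x, rfl⟩ i
      exact ⟨x i, rfl⟩
    · intro hy
      choose x hx using hy
      exact ⟨x, funext hx⟩
  haveI : ∀ i, Module.Free 𝔽 (LinearMap.range ((Ms i).canonicalMapAt p₀)) := fun i => inferInstance
  rw [hrange, (piSubEquiv _).finrank_eq, Module.finrank_pi_fintype]
  rfl

end AuxProof2


section AuxProof3

open PersMod

variable {𝔽 : Type} [Field 𝔽] {P : Type} [PartialOrder P]

lemma intervalModule_phi_val {I : Set P} (hc : SetConvex I) {p q : P} (h : p ≤ q)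
    (hq : q ∈ I) (v : (intervalModule 𝔽 I hc).V p) :
    ((intervalModule 𝔽 I hc).φ h v).1 = v.1 := by
  show ((if q ∈ I then (LinearMap.id : 𝔽 →ₗ[𝔽] 𝔽) else 0) v.1 : 𝔽) = v.1
  rw [if_pos hq, LinearMap.id_apply]

/-- The constant section of the full interval module. -/
def fullSection (𝔽 : Type) [Field 𝔽] (P : Type) [PartialOrder P] :
    (intervalModule 𝔽 (Set.univ : Set P) setConvex_univ).sections :=
  ⟨fun _p => ⟨1, Or.inl trivial⟩, fun p q h => Subtype.ext
    (intervalModule_phi_val setConvex_univ h (Set.mem_univ q) _)⟩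

/-- The coordinate-sum functional on the colimit of the full interval module. -/
def fullFunctional (𝔽 : Type) [Field 𝔽] (P : Type) [PartialOrder P] :
    (intervalModule 𝔽 (Set.univ : Set P) setConvex_univ).colim →ₗ[𝔽] 𝔽 :=
  (intervalModule 𝔽 (Set.univ : Set P) setConvex_univ).colimRel.liftQ
    (DirectSum.toModule 𝔽 P 𝔽 fun p => (fiber 𝔽 (Set.univ : Set P) p).subtype)
    (by
      rw [PersMod.colimRel, Submodule.span_le]
      rintro z ⟨p, q, h, v, rfl⟩
      rw [SetLike.mem_coe, LinearMap.mem_ker, map_sub]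
      erw [DirectSum.toModule_lof,
        DirectSum.toModule_lof]
      show ((intervalModule 𝔽 (Set.univ : Set P) setConvex_univ).φ h v).1 - v.1 = 0
      rw [intervalModule_phi_val setConvex_univ h (Set.mem_univ q), sub_self])

lemma genRankAt_fullInterval [Fintype P] (p₀ : P) :
    (intervalModule 𝔽 (Set.univ : Set P) setConvex_univ).genRankAt p₀ = 1 := by
  set W := intervalModule 𝔽 (Set.univ : Set P) setConvex_univ with hW
  -- the canonical image of the constant section is nonzero
  have hval : fullFunctional 𝔽 P (W.canonicalMapAt p₀ (fullSection 𝔽 P)) = 1 := by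
    rw [PersMod.canonicalMapAt_apply, Submodule.mkQ_apply]
    rw [fullFunctional, Submodule.liftQ_apply]
    erw [DirectSum.toModule_lof]
    rfl
  have hne : W.canonicalMapAt p₀ (fullSection 𝔽 P) ≠ 0 := by
    intro h0
    rw [h0, map_zero] at hval
    exact zero_ne_one hval
  have hnt : Nontrivial (LinearMap.range (W.canonicalMapAt p₀)) :=
    nontrivial_of_ne ⟨_, ⟨fullSection 𝔽 P, rfl⟩⟩ 0
      (fun hc => hne (by simpa using congrArg Subtype.val hc))
  have hpos : 0 < Module.finrank 𝔽 (LinearMap.range (W.canonicalMapAt p₀)) :=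
    Module.finrank_pos_iff.mpr hnt
  -- the rank is at most the dimension of the fiber, which is 1
  have hfib : Module.finrank 𝔽 (W.V p₀) = 1 := by
    have htop : fiber 𝔽 (Set.univ : Set P) p₀ = ⊤ :=
      Submodule.eq_top_iff'.mpr fun x => Or.inl trivial
    show Module.finrank 𝔽 (fiber 𝔽 (Set.univ : Set P) p₀) = 1
    rw [htop, finrank_top, Module.finrank_self]
  have hle : Module.finrank 𝔽 (LinearMap.range (W.canonicalMapAt p₀)) ≤ 1 := by
    have h1 : LinearMap.range (W.canonicalMapAt p₀)
        ≤ LinearMap.range (W.colimRel.mkQ.comp (DirectSum.lof 𝔽 P (fun q => W.V q) p₀)) :=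
      LinearMap.range_comp_le_range _ _
    have h2 : Module.finrank 𝔽 (LinearMap.range
        (W.colimRel.mkQ.comp (DirectSum.lof 𝔽 P (fun q => W.V q) p₀))) ≤ 1 := by
      rw [← hfib]
      exact LinearMap.finrank_range_le _
    exact le_trans (Submodule.finrank_mono h1) h2
  exact le_antisymm hle hpos

lemma isom_fullInterval_of_genRankAt_ne_zero [Fintype P] (hconn : ZigzagConnected P)
    (N : PersMod 𝔽 P) (hind : N.Indecomposable) (p₀ : P)
    (h0 : N.genRankAt p₀ ≠ 0) :
    N.Isom (intervalModule 𝔽 (Set.univ : Set P) setConvex_univ) := by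
  classical
  set W := intervalModule 𝔽 (Set.univ : Set P) setConvex_univ with hW
  -- get a section whose canonical image is nonzero
  have hex : ∃ x : N.sections, N.canonicalMapAt p₀ x ≠ 0 := by
    by_contra hc
    push_neg at hc
    have : N.canonicalMapAt p₀ = 0 := LinearMap.ext fun x => hc x
    apply h0
    rw [PersMod.genRankAt, this, LinearMap.range_zero, finrank_bot]
  obtain ⟨x, hx⟩ := hex
  -- a functional on the colimit which is 1 on the canonical image
  obtain ⟨f, hf0, -⟩ := Submodule.exists_dual_map_eq_bot_of_notMem
    (p := (⊥ : Submodule 𝔽 N.colim)) (by simpa using hx) inferInstance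
  set g₀ : N.colim →ₗ[𝔽] 𝔽 := (f (N.canonicalMapAt p₀ x))⁻¹ • f with hg₀
  have hg₀x : g₀ (N.canonicalMapAt p₀ x) = 1 := by
    rw [hg₀, LinearMap.smul_apply, smul_eq_mul, inv_mul_cancel₀ hf0]
  -- the family of functionals
  set g : ∀ p, N.V p →ₗ[𝔽] 𝔽 := fun p =>
    g₀ ∘ₗ N.colimRel.mkQ ∘ₗ DirectSum.lof 𝔽 P (fun q => N.V q) p with hg
  have gnat : ∀ (p q : P) (h : p ≤ q) (v : N.V p), g q (N.φ h v) = g p v := by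
    intro p q h v
    have : N.colimRel.mkQ (DirectSum.lof 𝔽 P (fun r => N.V r) q (N.φ h v))
        = N.colimRel.mkQ (DirectSum.lof 𝔽 P (fun r => N.V r) p v) := by
      rw [Submodule.mkQ_apply, Submodule.mkQ_apply, Submodule.Quotient.eq]
      exact Submodule.subset_span ⟨p, q, h, v, rfl⟩
    simp only [hg, LinearMap.comp_apply]
    rw [this]
  have hxsec : ∀ (p q : P) (h : p ≤ q), N.φ h (x.1 p) = x.1 q := x.2
  have hgp₀ : g p₀ (x.1 p₀) = 1 := hg₀x
  -- constancy along zigzags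
  have hconst : ∀ p, g p (x.1 p) = 1 := by
    have key : ∀ p q : P,
        Relation.ReflTransGen (fun a b : P => a ≤ b ∨ b ≤ a) p q →
          g p (x.1 p) = g q (x.1 q) := by
      intro p q hpq
      induction hpq with
      | refl => rfl
      | tail _hab hbc ih =>
        rcases hbc with hle | hle
        · rw [ih, ← hxsec _ _ hle, gnat]
        · rw [ih, ← hxsec _ _ hle, gnat]
    intro p
    rw [← hgp₀, key p₀ p (hconn p₀ p)]
  have hker : ∀ (p : P) (v : N.V p), g p (v - g p v • x.1 p) = 0 := by
    intro p v
    rw [map_sub, map_smul, smul_eq_mul, hconst p, mul_one, sub_self]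
  -- the complementary module
  set K : PersMod 𝔽 P :=
    { V := fun p => LinearMap.ker (g p)
      φ := fun {p q} h => (N.φ h).restrict (p := LinearMap.ker (g p))
        (q := LinearMap.ker (g q)) (fun v hv => by
          rw [LinearMap.mem_ker] at hv ⊢
          rw [gnat p q h v, hv])
      φ_refl := fun p => LinearMap.ext fun v => Subtype.ext (by
        rw [LinearMap.restrict_apply]
        exact LinearMap.congr_fun (N.φ_refl p) v.1)
      φ_comp := fun {p q r} hpq hqr => LinearMap.ext fun v => Subtype.ext (by
        simp only [LinearMap.comp_apply, LinearMap.restrict_apply]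
        exact LinearMap.congr_fun (N.φ_comp hpq hqr) v.1) } with hK
  -- N is isomorphic to W × K
  have hWval : ∀ (p q : P) (h : p ≤ q) (c : W.V p), (W.φ h c).1 = c.1 :=
    fun p q h c => intervalModule_phi_val setConvex_univ h (Set.mem_univ q) c
  let e : ∀ p, N.V p ≃ₗ[𝔽] (W.prodMod K).V p := fun p =>
    { toFun := fun v => (⟨g p v, Or.inl trivial⟩,
        ⟨v - g p v • x.1 p, LinearMap.mem_ker.mpr (hker p v)⟩)
      invFun := fun y => y.1.1 • x.1 p + y.2.1
      map_add' := fun u v => by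
        refine Prod.ext (Subtype.ext ?_) (Subtype.ext ?_)
        · exact map_add _ _ _
        · show (u + v) - g p (u + v) • x.1 p
            = (u - g p u • x.1 p) + (v - g p v • x.1 p)
          rw [map_add, add_smul]
          abel
      map_smul' := fun c v => by
        refine Prod.ext (Subtype.ext ?_) (Subtype.ext ?_)
        · exact map_smul _ _ _
        · show c • v - g p (c • v) • x.1 p = c • (v - g p v • x.1 p)
          rw [map_smul, smul_eq_mul, smul_sub, ← smul_smul]
      left_inv := fun v => by
        show g p v • x.1 p + (v - g p v • x.1 p) = v
        abel
      right_inv := fun y => by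
        refine Prod.ext (Subtype.ext ?_) (Subtype.ext ?_)
        · show g p (y.1.1 • x.1 p + y.2.1) = y.1.1
          rw [map_add, LinearMap.mem_ker.mp y.2.2, map_smul, smul_eq_mul,
            hconst p, mul_one, add_zero]
        · show (y.1.1 • x.1 p + y.2.1) - g p (y.1.1 • x.1 p + y.2.1) • x.1 p = y.2.1
          rw [map_add, LinearMap.mem_ker.mp y.2.2, map_smul, smul_eq_mul,
            hconst p, mul_one, add_zero]
          abel }
  have hnat : ∀ (p q : P) (h : p ≤ q) (v : N.V p),
      e q (N.φ h v) = (W.prodMod K).φ h (e p v) := by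
    intro p q h v
    refine Prod.ext (Subtype.ext ?_) (Subtype.ext ?_)
    · show g q (N.φ h v) = (W.φ h ⟨g p v, Or.inl trivial⟩).1
      exact (gnat p q h v).trans (hWval p q h ⟨g p v, Or.inl trivial⟩).symm
    · show N.φ h v - g q (N.φ h v) • x.1 q
        = ((K.φ h) ⟨v - g p v • x.1 p, LinearMap.mem_ker.mpr (hker p v)⟩).1
      show N.φ h v - g q (N.φ h v) • x.1 q = N.φ h (v - g p v • x.1 p)
      rw [map_sub, map_smul, hxsec p q h, gnat]
  rcases (hind.2 W K ⟨e, hnat⟩) with hWz | hKz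
  · exfalso
    have := (hWz p₀).elim (⟨(1 : 𝔽), Or.inl trivial⟩ : W.V p₀) (⟨0, Or.inr rfl⟩ : W.V p₀)
    exact one_ne_zero (congrArg Subtype.val this)
  · -- K is zero, so N ≅ W
    have hv : ∀ (p : P) (v : N.V p), v = g p v • x.1 p := by
      intro p v
      have hz := (hKz p).elim
        (⟨v - g p v • x.1 p, LinearMap.mem_ker.mpr (hker p v)⟩ : LinearMap.ker (g p))
        (0 : LinearMap.ker (g p))
      have h0' : v - g p v • x.1 p = 0 := congrArg Subtype.val hz
      exact sub_eq_zero.mp h0'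
    refine ⟨fun p =>
      { toFun := fun v => ⟨g p v, Or.inl trivial⟩
        invFun := fun c => c.1 • x.1 p
        map_add' := fun u v => Subtype.ext (map_add _ _ _)
        map_smul' := fun c v => Subtype.ext (map_smul _ _ _)
        left_inv := fun v => (hv p v).symm
        right_inv := fun c => Subtype.ext (by
          show g p (c.1 • x.1 p) = c.1
          rw [map_smul, smul_eq_mul, hconst p, mul_one]) }, ?_⟩
    intro p q h v
    refine Subtype.ext ?_
    show g q (N.φ h v) = (W.φ h ⟨g p v, Or.inl trivial⟩).1
    exact (gnat p q h v).trans (hWval p q h ⟨g p v, Or.inl trivial⟩).symm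

lemma PersMod.genRankAt_indec [Fintype P] (hconn : ZigzagConnected P)
    (N : PersMod 𝔽 P) (hind : N.Indecomposable) (p₀ : P) :
    N.genRankAt p₀
      = if N.Isom (intervalModule 𝔽 (Set.univ : Set P) setConvex_univ) then 1 else 0 := by
  by_cases h : N.Isom (intervalModule 𝔽 (Set.univ : Set P) setConvex_univ)
  · rw [if_pos h, PersMod.genRankAt_eq_of_isom _ _ h p₀, genRankAt_fullInterval p₀]
  · rw [if_neg h]
    by_contra h0
    exact h (isom_fullInterval_of_genRankAt_ne_zero hconn N hind p₀ h0)

end AuxProof3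

/-- If `M ≅ ⊕_{i ∈ F} M_i` with each `M_i` nonzero
indecomposable, then the generalized rank of `M` is the number of indices `i`
with `M_i ≅ V_P`, the interval module supported on all of `P`. -/
theorem genRank_eq_mult_of_full_interval (𝔽 : Type) [Field 𝔽] (P : Type)
    [PartialOrder P] [Fintype P] [Nonempty P] (hconn : ZigzagConnected P)
    (M : PersMod 𝔽 P) (F : Type) [Fintype F] (Ms : F → PersMod 𝔽 P)
    (hind : ∀ i, (Ms i).Indecomposable) (hiso : M.Isom (PersMod.dSum Ms)) :
    M.genRank =
      Nat.card {i : F // (Ms i).Isom (intervalModule 𝔽 (Set.univ : Set P) setConvex_univ)} := by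
  classical
  set p₀ := Classical.arbitrary P with hp₀
  have h1 : M.genRank = M.genRankAt p₀ := rfl
  rw [h1, PersMod.genRankAt_eq_of_isom M (PersMod.dSum Ms) hiso p₀,
    PersMod.genRankAt_dSum Ms p₀,
    Finset.sum_congr rfl fun i _ => PersMod.genRankAt_indec hconn (Ms i) (hind i) p₀,
    Nat.card_eq_fintype_card, Fintype.card_subtype, Finset.card_filter]
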